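/- Let a, ã, b, c, c̃, δ be real numbers with b² ≤ 1. Then ‖s_a − p_{ã,b}‖² = (a − ã)² + 1 and ‖q_{b,c} − t_{c̃}‖² = (c̃ − c)² + 1 (squared Euclidean norms in ℝ³). Consequently, the closed balls of radius 1/2 centered at s_a and at p_{ã,b} intersect if and only if a = ã, and the closed balls of radius 1/2 centered at q_{b,c} and at t_{c̃} intersect if and only if c = c̃. -/

import Mathlib

noncomputable section

/-- The point `s_a = (1 + a·cos δ, a·sin δ, 0)` in `ℝ³`. -/
def sPt (δ a : ℝ) : EuclideanSpace ℝ (Fin 3) :=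
  (WithLp.equiv 2 (Fin 3 → ℝ)).symm ![1 + a * Real.cos δ, a * Real.sin δ, 0]

/-- The point `p_{a,b} = (1 + a·cos δ − b·sin δ, a·sin δ + b·cos δ, √(1 − b²))` in `ℝ³`. -/
def pPt (δ a b : ℝ) : EuclideanSpace ℝ (Fin 3) :=
  (WithLp.equiv 2 (Fin 3 → ℝ)).symm
    ![1 + a * Real.cos δ - b * Real.sin δ, a * Real.sin δ + b * Real.cos δ,
      Real.sqrt (1 - b ^ 2)]

/-- The point `q_{b,c} = (−c, b, √(1 − b²))` in `ℝ³`. -/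
def qPt (b c : ℝ) : EuclideanSpace ℝ (Fin 3) :=
  (WithLp.equiv 2 (Fin 3 → ℝ)).symm ![-c, b, Real.sqrt (1 - b ^ 2)]

/-- The point `t_c = (−c, 0, 0)` in `ℝ³`. -/
def tPt (c : ℝ) : EuclideanSpace ℝ (Fin 3) :=
  (WithLp.equiv 2 (Fin 3 → ℝ)).symm ![-c, 0, 0]

lemma normsq (x : EuclideanSpace ℝ (Fin 3)) :
    ‖x‖ ^ 2 = x 0 ^ 2 + x 1 ^ 2 + x 2 ^ 2 := by
  rw [EuclideanSpace.norm_eq, Real.sq_sqrt (by positivity)]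
  simp [Fin.sum_univ_three, sq_abs]

lemma inter_iff (x y : EuclideanSpace ℝ (Fin 3)) :
    (Metric.closedBall x (1 / 2) ∩ Metric.closedBall y (1 / 2)).Nonempty ↔
      dist x y ≤ 1 := by
  constructor
  · rintro ⟨z, hz1, hz2⟩
    calc dist x y ≤ dist x z + dist z y := dist_triangle _ _ _
      _ ≤ 1 / 2 + 1 / 2 := add_le_add (Metric.mem_closedBall'.1 hz1) hz2
      _ = 1 := by norm_num
  · intro h
    refine ⟨midpoint ℝ x y, ?_, ?_⟩ <;> simp [Metric.mem_closedBall,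
      dist_midpoint_left, dist_midpoint_right, dist_comm] <;> linarith

theorem stmt0 (a a' b c c' δ : ℝ) (hb : b ^ 2 ≤ 1) :
    ‖sPt δ a - pPt δ a' b‖ ^ 2 = (a - a') ^ 2 + 1 ∧
    ‖qPt b c - tPt c'‖ ^ 2 = (c' - c) ^ 2 + 1 ∧
    ((Metric.closedBall (sPt δ a) (1 / 2) ∩
        Metric.closedBall (pPt δ a' b) (1 / 2)).Nonempty ↔ a = a') ∧
    ((Metric.closedBall (qPt b c) (1 / 2) ∩
        Metric.closedBall (tPt c') (1 / 2)).Nonempty ↔ c = c') := by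
  have h1 : ‖sPt δ a - pPt δ a' b‖ ^ 2 = (a - a') ^ 2 + 1 := by
    rw [normsq]
    simp only [sPt, pPt, WithLp.equiv_symm_apply, PiLp.toLp_apply]
    have hs : Real.sqrt (1 - b ^ 2) ^ 2 = 1 - b ^ 2 := Real.sq_sqrt (by linarith)
    have hc : Real.cos δ ^ 2 + Real.sin δ ^ 2 = 1 := Real.cos_sq_add_sin_sq δ
    simp only [PiLp.sub_apply]
    norm_num [Matrix.cons_val_zero, Matrix.cons_val_one, Matrix.head_cons, Matrix.cons_val_two, Matrix.tail_cons]
    nlinarith [hs, hc]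
  have h2 : ‖qPt b c - tPt c'‖ ^ 2 = (c' - c) ^ 2 + 1 := by
    rw [normsq]
    simp only [qPt, tPt, WithLp.equiv_symm_apply, PiLp.toLp_apply]
    have hs : Real.sqrt (1 - b ^ 2) ^ 2 = 1 - b ^ 2 := Real.sq_sqrt (by linarith)
    simp only [PiLp.sub_apply]
    norm_num [Matrix.cons_val_zero, Matrix.cons_val_one, Matrix.head_cons, Matrix.cons_val_two, Matrix.tail_cons]
    nlinarith [hs]
  refine ⟨h1, h2, ?_, ?_⟩
  · rw [inter_iff, dist_eq_norm]
    constructor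
    · intro h
      have h' : ‖sPt δ a - pPt δ a' b‖ ^ 2 ≤ 1 := by nlinarith [norm_nonneg (sPt δ a - pPt δ a' b)]
      rw [h1] at h'
      nlinarith [sq_nonneg (a - a')]
    · intro h
      have : ‖sPt δ a - pPt δ a' b‖ ^ 2 = 1 := by rw [h1, h]; ring
      nlinarith [norm_nonneg (sPt δ a - pPt δ a' b)]
  · rw [inter_iff, dist_eq_norm]
    constructor
    · intro h
      have h' : ‖qPt b c - tPt c'‖ ^ 2 ≤ 1 := by nlinarith [norm_nonneg (qPt b c - tPt c')]
      rw [h2] at h'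
      nlinarith [sq_nonneg (c' - c)]
    · intro h
      have : ‖qPt b c - tPt c'‖ ^ 2 = 1 := by rw [h2, h]; ring
      nlinarith [norm_nonneg (qPt b c - tPt c')]
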